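/- arXiv:2409.20489 — 3 statements merged into one kernel-verified Lean document; each statement's English description precedes it below -/
import Mathlib

section
/- Let μ : ℝ → ℝ be monotone increasing and L_μ-Lipschitz, M positive definite, and suppose ‖θ* - θ̂‖_M ≤ β. With θ̃ := θ̂ + β(M⁻¹x)/√(xᵀM⁻¹x) for x ≠ 0, we have both μ(⟪x,θ̃⟫) ≥ μ(⟪x,θ*⟫) and μ(⟪x,θ̃⟫) - μ(⟪x,θ*⟫) ≤ 2 L_μ β ‖x‖_{M⁻¹}. -/
open Matrix


lemma sym_aux {d : ℕ} {M : Matrix (Fin d) (Fin d) ℝ} (hM : M.IsHermitian) (u v : Fin d → ℝ) :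
    v ⬝ᵥ (M *ᵥ u) = u ⬝ᵥ (M *ᵥ v) := by
  rw [dotProduct_mulVec, ← mulVec_transpose, dotProduct_comm]
  congr 1
  rw [show Mᵀ = M from by simpa using hM.eq]

lemma dp_nonneg {d : ℕ} {M : Matrix (Fin d) (Fin d) ℝ} (hM : M.PosDef) (w : Fin d → ℝ) :
    0 ≤ w ⬝ᵥ (M *ᵥ w) := by
  have := hM.posSemidef.re_dotProduct_nonneg w
  simpa using this

lemma dp_pos {d : ℕ} {M : Matrix (Fin d) (Fin d) ℝ} (hM : M.PosDef) {w : Fin d → ℝ}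
    (hw : w ≠ 0) : 0 < w ⬝ᵥ (M *ᵥ w) := by
  have := hM.re_dotProduct_pos hw
  simpa using this

lemma cs_aux {d : ℕ} {M : Matrix (Fin d) (Fin d) ℝ} (hM : M.PosDef) (u v : Fin d → ℝ) :
    |u ⬝ᵥ (M *ᵥ v)| ≤ Real.sqrt (u ⬝ᵥ (M *ᵥ u)) * Real.sqrt (v ⬝ᵥ (M *ᵥ v)) := by
  set a := u ⬝ᵥ (M *ᵥ v) with ha
  set s := u ⬝ᵥ (M *ᵥ u) with hs
  set t := v ⬝ᵥ (M *ᵥ v) with ht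
  have hs0 : 0 ≤ s := dp_nonneg hM u
  have ht0 : 0 ≤ t := dp_nonneg hM v
  have hsym := sym_aux hM.isHermitian u v
  have key : ∀ r : ℝ, 0 ≤ s * r * r + 2 * a * r + t := by
    intro r
    have h0 : 0 ≤ (r • u + v) ⬝ᵥ (M *ᵥ (r • u + v)) := dp_nonneg hM _
    rw [mulVec_add, mulVec_smul, add_dotProduct, smul_dotProduct, dotProduct_add,
      dotProduct_add, dotProduct_smul, dotProduct_smul] at h0
    rw [← ha, ← hs, ← ht] at h0
    rw [hsym] at h0
    simp only [smul_eq_mul] at h0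
    nlinarith [h0]
  have hsq : a * a ≤ s * t := by
    rcases eq_or_lt_of_le hs0 with hse | hsp
    · -- s = 0; then quadratic 2ar + t ≥ 0 for all r forces a = 0
      have ha0 : a = 0 := by
        by_contra h
        have := key (-(t + 1) / (2 * a) * (if 0 < a * (-(t+1)) then 1 else 1))
        -- pick r = -(t+1)/(2a)
        have h2 := key (-(t + 1) / (2 * a))
        rw [← hse] at h2
        field_simp at h2
        have ha2 : 0 < a ^ 2 := lt_of_le_of_ne (sq_nonneg a) (Ne.symm (pow_ne_zero 2 h))
        rw [le_div_iff₀ ha2] at h2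
        nlinarith [h2, ha2]
      rw [ha0, ← hse]; nlinarith
    · have h2 := key (-a / s)
      have : s * (-a / s) * (-a / s) + 2 * a * (-a / s) + t = -(a * a) / s + t := by
        field_simp; ring
      rw [this] at h2
      rw [div_add' _ _ _ (ne_of_gt hsp)] at h2
      rcases div_nonneg_iff.mp h2 with ⟨h3, _⟩ | ⟨_, h4⟩
      · nlinarith
      · linarith
  calc |a| = Real.sqrt (a * a) := by rw [Real.sqrt_mul_self_eq_abs]
    _ ≤ Real.sqrt (s * t) := Real.sqrt_le_sqrt hsq
    _ = Real.sqrt s * Real.sqrt t := Real.sqrt_mul hs0 t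

/-- Per-round optimism and error bound for generalized linear bandits: with `μ`
monotone increasing and `Lμ`-Lipschitz, `‖θ* - θ̂‖_M ≤ β`, and the optimistic
estimate `θ̃`, we have `μ(⟪x,θ̃⟫) ≥ μ(⟪x,θ*⟫)` and
`μ(⟪x,θ̃⟫) - μ(⟪x,θ*⟫) ≤ 2 Lμ β ‖x‖_{M⁻¹}`. -/
theorem stmt_5 {d : ℕ} (μ : ℝ → ℝ) (hmono : Monotone μ) (Lμ : ℝ) (hLμ : 0 ≤ Lμ)
    (hLip : ∀ a b : ℝ, |μ a - μ b| ≤ Lμ * |a - b|)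
    (M : Matrix (Fin d) (Fin d) ℝ) (hM : M.PosDef)
    (θhat θstar : Fin d → ℝ) (β : ℝ)
    (hconf : Real.sqrt ((θstar - θhat) ⬝ᵥ (M *ᵥ (θstar - θhat))) ≤ β)
    (x : Fin d → ℝ) (hx : x ≠ 0)
    (θtilde : Fin d → ℝ)
    (hθtilde : θtilde = θhat + (β / Real.sqrt (x ⬝ᵥ (M⁻¹ *ᵥ x))) • (M⁻¹ *ᵥ x)) :
    μ (x ⬝ᵥ θstar) ≤ μ (x ⬝ᵥ θtilde) ∧
      μ (x ⬝ᵥ θtilde) - μ (x ⬝ᵥ θstar) ≤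
        2 * Lμ * β * Real.sqrt (x ⬝ᵥ (M⁻¹ *ᵥ x)) := by
  have hN : (M⁻¹).PosDef := hM.inv
  set s := x ⬝ᵥ (M⁻¹ *ᵥ x) with hsdef
  have hspos : 0 < s := dp_pos hN hx
  have hrs : 0 < Real.sqrt s := Real.sqrt_pos.mpr hspos
  have hβ : 0 ≤ β := le_trans (Real.sqrt_nonneg _) hconf
  set v := θstar - θhat with hv
  -- M⁻¹ * M = 1
  have hinv : M⁻¹ *ᵥ (M *ᵥ v) = v := by
    rw [mulVec_mulVec, Matrix.nonsing_inv_mul M hM.det_pos.ne'.isUnit, one_mulVec]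
  -- Cauchy–Schwarz bound on x ⬝ᵥ v
  have hcs := cs_aux hN x (M *ᵥ v)
  rw [hinv] at hcs
  rw [show (M *ᵥ v) ⬝ᵥ v = v ⬝ᵥ (M *ᵥ v) from dotProduct_comm _ _, ← hsdef] at hcs
  have hbound : |x ⬝ᵥ v| ≤ β * Real.sqrt s := by
    calc |x ⬝ᵥ v| ≤ Real.sqrt s * Real.sqrt (v ⬝ᵥ (M *ᵥ v)) := hcs
      _ ≤ Real.sqrt s * β := by
          exact mul_le_mul_of_nonneg_left hconf (Real.sqrt_nonneg _)
      _ = β * Real.sqrt s := mul_comm _ _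
  -- compute x ⬝ᵥ θtilde
  have htilde : x ⬝ᵥ θtilde = x ⬝ᵥ θhat + β * Real.sqrt s := by
    rw [hθtilde, dotProduct_add, dotProduct_smul]
    congr 1
    rw [smul_eq_mul, ← hsdef]
    rw [div_mul_eq_mul_div, div_eq_iff hrs.ne', mul_assoc, Real.mul_self_sqrt hspos.le]
  have hstar : x ⬝ᵥ θstar = x ⬝ᵥ θhat + x ⬝ᵥ v := by
    rw [hv]; rw [show θstar = θhat + (θstar - θhat) by abel, dotProduct_add]
    abel
  have hdiff : x ⬝ᵥ θtilde - x ⬝ᵥ θstar = β * Real.sqrt s - x ⬝ᵥ v := by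
    rw [htilde, hstar]; ring
  have h1 : x ⬝ᵥ θstar ≤ x ⬝ᵥ θtilde := by
    have := abs_le.mp hbound
    linarith [hdiff, this.2]
  have h2 : x ⬝ᵥ θtilde - x ⬝ᵥ θstar ≤ 2 * β * Real.sqrt s := by
    have := abs_le.mp hbound
    linarith [this.1]
  refine ⟨hmono h1, ?_⟩
  calc μ (x ⬝ᵥ θtilde) - μ (x ⬝ᵥ θstar) ≤ |μ (x ⬝ᵥ θtilde) - μ (x ⬝ᵥ θstar)| := le_abs_self _
    _ ≤ Lμ * |x ⬝ᵥ θtilde - x ⬝ᵥ θstar| := hLip _ _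
    _ = Lμ * (x ⬝ᵥ θtilde - x ⬝ᵥ θstar) := by rw [abs_of_nonneg (by linarith)]
    _ ≤ Lμ * (2 * β * Real.sqrt s) := mul_le_mul_of_nonneg_left h2 hLμ
    _ = 2 * Lμ * β * Real.sqrt s := by ring
end

section
/- Suppose for each time t, random variables r̃_t, c̃_t and action ã_t satisfy the optimism properties E[r̃*_t | history] ≥ OPT/T and E[c̃*_t | history] ≤ B/T for the optimal static action, and the algorithm's choice satisfies r̃_t - Zγ_t c̃_t ≥ r̃*_t - Zγ_t c̃*_t pointwise with γ_t ≥ 0, Z ≥ 0. Then for any stopping time T_stop ≤ T, Σ_{t=1}^{T_stop} E[r̃_t] ≥ (T_stop/T)·OPT + Z·Σ_{t=1}^{T_stop} γ_t·E[c̃_t - B/T]. -/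
/-- Lemma 8 of Agrawal–Devanur, deterministic/conditional-expectation version:
optimism of the per-round estimates plus optimality of the algorithm's choice yields
`Σ_{t<T_stop} r̃_t ≥ (T_stop/T)·OPT + Z Σ_{t<T_stop} γ_t (c̃_t − B/T)`. -/
theorem stmt_8 (T : ℕ) (hT : 0 < T) (OPT B Z : ℝ) (hZ : 0 ≤ Z)
    (r c rstar cstar γ : ℕ → ℝ) (hγ : ∀ t, 0 ≤ γ t)
    (hopt_r : ∀ t, OPT / T ≤ rstar t)
    (hopt_c : ∀ t, cstar t ≤ B / T)
    (hchoice : ∀ t, rstar t - Z * γ t * cstar t ≤ r t - Z * γ t * c t)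
    (Tstop : ℕ) (hstop : Tstop ≤ T) :
    (Tstop : ℝ) / T * OPT + Z * ∑ t ∈ Finset.range Tstop, γ t * (c t - B / T) ≤
      ∑ t ∈ Finset.range Tstop, r t := by
  have key : ∀ t, OPT / T + Z * (γ t * (c t - B / T)) ≤ r t := by
    intro t
    have h1 : Z * γ t * (c t - B / T) ≤ Z * γ t * (c t - cstar t) := by
      have : cstar t ≤ B / T := hopt_c t
      have hzg : 0 ≤ Z * γ t := mul_nonneg hZ (hγ t)
      nlinarith
    have h2 := hchoice t
    have h3 := hopt_r t
    nlinarith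
  calc (Tstop : ℝ) / T * OPT + Z * ∑ t ∈ Finset.range Tstop, γ t * (c t - B / T)
      = ∑ t ∈ Finset.range Tstop, (OPT / T + Z * (γ t * (c t - B / T))) := by
        rw [Finset.sum_add_distrib, Finset.sum_const, Finset.card_range,
          ← Finset.mul_sum]
        ring
    _ ≤ ∑ t ∈ Finset.range Tstop, r t := Finset.sum_le_sum fun t _ => key t
end

section
/- Let μ' ≥ κ > 0 on ℝ and M := Σ_i x_i x_iᵀ be positive definite. If θ̂ solves Σ_i (y_i − μ(x_iᵀθ̂))x_i = 0 and θ* satisfies y_i = μ(x_iᵀθ*) + η_i, then ‖θ̂ − θ*‖_M ≤ (1/κ)·‖Σ_i η_i x_i‖_{M⁻¹}. -/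
open Matrix

private lemma dot_sum' {d n : ℕ} (v : Fin d → ℝ) (f : Fin n → Fin d → ℝ) :
    v ⬝ᵥ (∑ i, f i) = ∑ i, v ⬝ᵥ f i := by
  simp only [dotProduct, Finset.sum_apply, Finset.mul_sum]
  exact Finset.sum_comm

private lemma sum_mulVec' {d n : ℕ} (A : Fin n → Matrix (Fin d) (Fin d) ℝ) (v : Fin d → ℝ) :
    (∑ i, A i) *ᵥ v = ∑ i, A i *ᵥ v := by
  ext j
  simp only [Matrix.mulVec, dotProduct, Finset.sum_apply, Matrix.sum_apply, Finset.sum_mul]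
  exact Finset.sum_comm

private lemma vecMulVec_mulVec' {d : ℕ} (u v : Fin d → ℝ) :
    Matrix.vecMulVec u u *ᵥ v = (u ⬝ᵥ v) • u := by
  ext j
  simp only [Matrix.mulVec, Matrix.vecMulVec_apply, dotProduct, Pi.smul_apply, smul_eq_mul,
    Finset.sum_mul]
  exact Finset.sum_congr rfl fun k _ => by ring

private lemma dot_cs {d : ℕ} (u v : Fin d → ℝ) :
    u ⬝ᵥ v ≤ Real.sqrt (u ⬝ᵥ u) * Real.sqrt (v ⬝ᵥ v) := by
  have huu : u ⬝ᵥ u = ∑ i, u i ^ 2 := by simp [dotProduct, pow_two]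
  have hvv : v ⬝ᵥ v = ∑ i, v i ^ 2 := by simp [dotProduct, pow_two]
  have h := Finset.sum_mul_sq_le_sq_mul_sq Finset.univ u v
  have h1 : u ⬝ᵥ v ≤ Real.sqrt ((u ⬝ᵥ v) ^ 2) := by
    rw [Real.sqrt_sq_eq_abs]; exact le_abs_self _
  refine h1.trans ?_
  rw [huu, hvv, ← Real.sqrt_mul (by positivity)]
  exact Real.sqrt_le_sqrt h

/-- Deterministic estimation-error bound for the GLM maximum-likelihood estimator:
if `θ̂` solves the score equation and `y_i = μ(x_iᵀθ*) + η_i`, then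
`‖θ̂ − θ*‖_M ≤ (1/κ) ‖Σ_i η_i x_i‖_{M⁻¹}`. -/
theorem stmt_13 {d n : ℕ} (μ μ' : ℝ → ℝ) (κ : ℝ) (hκ : 0 < κ)
    (hderiv : ∀ z : ℝ, HasDerivAt μ (μ' z) z) (hlb : ∀ z : ℝ, κ ≤ μ' z)
    (x : Fin n → Fin d → ℝ) (y η : Fin n → ℝ)
    (M : Matrix (Fin d) (Fin d) ℝ)
    (hMdef : M = ∑ i, Matrix.vecMulVec (x i) (x i)) (hM : M.PosDef)
    (θhat θstar : Fin d → ℝ)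
    (hmle : ∑ i, (y i - μ (x i ⬝ᵥ θhat)) • x i = 0)
    (hmodel : ∀ i, y i = μ (x i ⬝ᵥ θstar) + η i) :
    Real.sqrt ((θhat - θstar) ⬝ᵥ (M *ᵥ (θhat - θstar))) ≤
      (1 / κ) * Real.sqrt ((∑ i, η i • x i) ⬝ᵥ (M⁻¹ *ᵥ ∑ i, η i • x i)) := by
  set Δ : Fin d → ℝ := θhat - θstar with hΔ
  set S : Fin d → ℝ := ∑ i, η i • x i with hS
  -- monotonicity consequence of derivative lower bound
  have hmono : Monotone (fun t => μ t - κ * t) := by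
    apply monotone_of_hasDerivAt_nonneg (f' := fun t => μ' t - κ)
    · intro t
      exact ((hderiv t).sub ((hasDerivAt_id' t).const_mul κ)).congr_deriv (by ring)
    · intro t
      simpa using sub_nonneg.2 (hlb t)
  have key : ∀ a b : ℝ, κ * (a - b) ^ 2 ≤ (μ a - μ b) * (a - b) := by
    intro a b
    rcases le_total b a with h | h
    · have h2 : μ b - κ * b ≤ μ a - κ * a := hmono h
      nlinarith [sub_nonneg.2 h]
    · have h2 : μ a - κ * a ≤ μ b - κ * b := hmono h
      nlinarith [sub_nonneg.2 h]
  -- Step A : ∑ (μ a_i - μ b_i) • x i = S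
  have stepA : ∑ i, (μ (x i ⬝ᵥ θhat) - μ (x i ⬝ᵥ θstar)) • x i = S := by
    have h1 : ∀ i, (y i - μ (x i ⬝ᵥ θhat)) • x i
        = η i • x i - (μ (x i ⬝ᵥ θhat) - μ (x i ⬝ᵥ θstar)) • x i := by
      intro i
      rw [← sub_smul, hmodel i]
      congr 1
      ring
    rw [Finset.sum_congr rfl (fun i _ => h1 i), Finset.sum_sub_distrib] at hmle
    rw [hS]
    exact (sub_eq_zero.mp hmle).symm
  -- quadratic form as sum of squares
  have hQ : Δ ⬝ᵥ (M *ᵥ Δ) = ∑ i, (x i ⬝ᵥ Δ) ^ 2 := by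
    rw [hMdef, sum_mulVec', dot_sum']
    refine Finset.sum_congr rfl fun i _ => ?_
    rw [vecMulVec_mulVec', dotProduct_smul, smul_eq_mul, dotProduct_comm, pow_two]
  set Q : ℝ := Δ ⬝ᵥ (M *ᵥ Δ) with hQdef
  have hQnonneg : 0 ≤ Q := by rw [hQ]; positivity
  -- Step B : κ * Q ≤ Δ ⬝ᵥ S
  have stepB : κ * Q ≤ Δ ⬝ᵥ S := by
    have hds : Δ ⬝ᵥ S = ∑ i, (μ (x i ⬝ᵥ θhat) - μ (x i ⬝ᵥ θstar)) * (x i ⬝ᵥ Δ) := by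
      rw [← stepA, dot_sum']
      refine Finset.sum_congr rfl fun i _ => ?_
      rw [dotProduct_smul, smul_eq_mul, dotProduct_comm Δ (x i)]
    have hterm : ∀ i, κ * (x i ⬝ᵥ Δ) ^ 2
        ≤ (μ (x i ⬝ᵥ θhat) - μ (x i ⬝ᵥ θstar)) * (x i ⬝ᵥ Δ) := by
      intro i
      have hsub : x i ⬝ᵥ Δ = x i ⬝ᵥ θhat - x i ⬝ᵥ θstar := by
        rw [hΔ, dotProduct_sub]
      rw [hsub]
      exact key _ _
    rw [hds, hQ, Finset.mul_sum]
    exact Finset.sum_le_sum fun i _ => hterm i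
  -- Step C : Cauchy-Schwarz in the M inner product
  have hdet : IsUnit M.det := hM.det_pos.ne'.isUnit
  have hMinv : M * M⁻¹ = 1 := Matrix.mul_nonsing_inv M hdet
  have hMw : M *ᵥ (M⁻¹ *ᵥ S) = S := by
    rw [Matrix.mulVec_mulVec, hMinv, Matrix.one_mulVec]
  have hPS := hM.posSemidef
  obtain ⟨R, hRR, hRsymm⟩ : ∃ R : Matrix (Fin d) (Fin d) ℝ, R * R = M ∧ Rᵀ = R := by
    open scoped MatrixOrder in
    exact ⟨CFC.sqrt M, CFC.sqrt_mul_sqrt_self M hPS.nonneg,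
      (CFC.sqrt_nonneg M).posSemidef.1.eq⟩
  have hRdot : ∀ u v : Fin d → ℝ, u ⬝ᵥ (M *ᵥ v) = (R *ᵥ u) ⬝ᵥ (R *ᵥ v) := by
    intro u v
    rw [← hRR, ← Matrix.mulVec_mulVec, Matrix.dotProduct_mulVec u R,
      ← Matrix.mulVec_transpose, hRsymm]
  have stepC : Δ ⬝ᵥ S ≤ Real.sqrt Q * Real.sqrt (S ⬝ᵥ (M⁻¹ *ᵥ S)) := by
    have h1 : Δ ⬝ᵥ S = (R *ᵥ Δ) ⬝ᵥ (R *ᵥ (M⁻¹ *ᵥ S)) := by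
      conv_lhs => rw [← hMw]
      rw [hRdot]
    have h2 : (R *ᵥ Δ) ⬝ᵥ (R *ᵥ Δ) = Q := by rw [hQdef, hRdot]
    have h3 : (R *ᵥ (M⁻¹ *ᵥ S)) ⬝ᵥ (R *ᵥ (M⁻¹ *ᵥ S)) = S ⬝ᵥ (M⁻¹ *ᵥ S) := by
      rw [← hRdot, hMw, dotProduct_comm]
    calc Δ ⬝ᵥ S = (R *ᵥ Δ) ⬝ᵥ (R *ᵥ (M⁻¹ *ᵥ S)) := h1
      _ ≤ Real.sqrt ((R *ᵥ Δ) ⬝ᵥ (R *ᵥ Δ))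
            * Real.sqrt ((R *ᵥ (M⁻¹ *ᵥ S)) ⬝ᵥ (R *ᵥ (M⁻¹ *ᵥ S))) := dot_cs _ _
      _ = Real.sqrt Q * Real.sqrt (S ⬝ᵥ (M⁻¹ *ᵥ S)) := by rw [h2, h3]
  -- combine
  have hfin : κ * Q ≤ Real.sqrt Q * Real.sqrt (S ⬝ᵥ (M⁻¹ *ᵥ S)) := stepB.trans stepC
  have hsqQ : Real.sqrt Q ^ 2 = Q := Real.sq_sqrt hQnonneg
  show Real.sqrt Q ≤ 1 / κ * Real.sqrt (S ⬝ᵥ (M⁻¹ *ᵥ S))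
  rcases eq_or_lt_of_le (Real.sqrt_nonneg Q) with h0 | h0
  · rw [← h0]
    positivity
  · have hkey : κ * Real.sqrt Q ≤ Real.sqrt (S ⬝ᵥ (M⁻¹ *ᵥ S)) := by
      nlinarith [hfin, hsqQ, h0]
    rw [div_mul_eq_mul_div, one_mul, le_div_iff₀ hκ]
    linarith [hkey]
end
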